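/- For every δ ∈ ℕ, every function g : ℕ → ℕ and every dimension n ∈ ℕ, there exists N ∈ ℕ such that for every infinite sequence v_0, v_1, v_2, ... of vectors of ℕ^n satisfying |v_i| ≤ i + δ for all i (where |v| denotes the sum of the components of v), there exist indices i_0 < i_1 < ... < i_{g(n)} ≤ N with v_{i_0} ≤ v_{i_1} ≤ ... ≤ v_{i_{g(n)}} componentwise. -/

import Mathlib

/-- A population protocol `(Q, T, L, X, I, O)`: `T` is a finite set of transitions, each a pair
of size-2 multisets over the states `Q`, such that every size-2 multiset is the left-hand side
of some transition; `L` is the leader multiset, `I` the input mapping and `O` the output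
mapping. -/
structure PopulationProtocol (Q X : Type) where
  T : Finset (Multiset Q × Multiset Q)
  pre_card : ∀ t ∈ T, Multiset.card t.1 = 2
  post_card : ∀ t ∈ T, Multiset.card t.2 = 2
  total : ∀ p q : Q, ∃ t ∈ T, t.1 = {p, q}
  L : Multiset Q
  I : X → Q
  O : Q → Bool

namespace PopulationProtocol

variable {Q X : Type} [DecidableEq Q]

/-- A configuration is a multiset of states with at least two elements. -/
def IsConfig (C : Multiset Q) : Prop := 2 ≤ Multiset.card C

/-- One step: some transition `t` enabled at `C` (i.e. `t.1 ≤ C`) fires. -/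
def Step (P : PopulationProtocol Q X) (C C' : Multiset Q) : Prop :=
  ∃ t ∈ P.T, t.1 ≤ C ∧ C' = C - t.1 + t.2

/-- Reachability `C →* C'` via a finite sequence of transitions. -/
def Reach (P : PopulationProtocol Q X) : Multiset Q → Multiset Q → Prop :=
  Relation.ReflTransGen P.Step

/-- Firing a given transition `t`. -/
def StepT (P : PopulationProtocol Q X) (t : Multiset Q × Multiset Q)
    (C C' : Multiset Q) : Prop :=
  t ∈ P.T ∧ t.1 ≤ C ∧ C' = C - t.1 + t.2

/-- `C →σ C'`: successive firing of the transitions in the finite sequence `σ`. -/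
def FireSeq (P : PopulationProtocol Q X) :
    List (Multiset Q × Multiset Q) → Multiset Q → Multiset Q → Prop
  | [], C, C' => C' = C
  | t :: σ, C, C' => ∃ D, P.StepT t C D ∧ P.FireSeq σ D C'

/-- The output of a configuration is `b` if all states populated by it have output `b`. -/
def Output (P : PopulationProtocol Q X) (C : Multiset Q) (b : Bool) : Prop :=
  ∀ q ∈ C, P.O q = b

/-- A configuration is `b`-stable if every configuration reachable from it has output `b`. -/
def Stable (P : PopulationProtocol Q X) (b : Bool) (C : Multiset Q) : Prop :=
  IsConfig C ∧ ∀ C', P.Reach C C' → P.Output C' b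

/-- The set `S = S₀ ∪ S₁` of stable configurations. -/
def StableSet (P : PopulationProtocol Q X) (C : Multiset Q) : Prop :=
  P.Stable false C ∨ P.Stable true C

/-- The initial configuration `IC(v) = L + Σ_x v(x)·I(x)` for an input `v`. -/
def IC [Fintype X] (P : PopulationProtocol Q X) (v : X → ℕ) : Multiset Q :=
  P.L + ∑ x : X, Multiset.replicate (v x) (P.I x)

/-- An execution: an infinite sequence of configurations, each step firing a transition. -/
def IsExecution (P : PopulationProtocol Q X) (σ : ℕ → Multiset Q) : Prop :=
  ∀ i, P.Step (σ i) (σ (i + 1))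

/-- Fairness: a configuration reachable from infinitely many `σ i` occurs infinitely often. -/
def Fair (P : PopulationProtocol Q X) (σ : ℕ → Multiset Q) : Prop :=
  ∀ C : Multiset Q, (∀ N, ∃ i, N ≤ i ∧ P.Reach (σ i) C) → ∀ N, ∃ i, N ≤ i ∧ σ i = C

/-- The output of an execution is `b` if from some index on every configuration has output `b`. -/
def OutputOf (P : PopulationProtocol Q X) (σ : ℕ → Multiset Q) (b : Bool) : Prop :=
  ∃ N, ∀ i, N ≤ i → P.Output (σ i) b

/-- The protocol computes `φ` if for every input `v` (of size at least 2) every fair execution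
from `IC(v)` has output `φ(v)`. -/
def Computes [Fintype X] (P : PopulationProtocol Q X) (φ : (X → ℕ) → Bool) : Prop :=
  ∀ v : X → ℕ, 2 ≤ ∑ x : X, v x →
    ∀ σ : ℕ → Multiset Q, P.IsExecution σ → P.Fair σ → σ 0 = P.IC v → P.OutputOf σ (φ v)

/-- `(B, S)` is a basis element of a set `𝒞` of configurations if `B + ℕ^S ⊆ 𝒞`. -/
def IsBasisElement (𝒞 : Multiset Q → Prop) (B : Multiset Q) (S : Finset Q) : Prop :=
  ∀ D : Multiset Q, (∀ q ∈ D, q ∈ S) → 𝒞 (B + D)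

/-- A (finite) basis of a set `𝒞` of configurations: `𝒞 = ⋃_{(B,S)∈ℬ} (B + ℕ^S)`. -/
def IsBasis (𝒞 : Multiset Q → Prop) (ℬ : Finset (Multiset Q × Finset Q)) : Prop :=
  ∀ C : Multiset Q, 𝒞 C ↔ ∃ p ∈ ℬ, ∃ D : Multiset Q, (∀ q ∈ D, q ∈ p.2) ∧ C = p.1 + D

/-- `‖B‖∞`, the maximal multiplicity of a state in `B`. -/
def normInf [Fintype Q] (B : Multiset Q) : ℕ := Finset.univ.sup fun q => B.count q

/-- The displacement `Δ(t) = p' + q' − p − q ∈ ℤ^Q` of a transition `t = (p,q ↦ p',q')`. -/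
def displ (t : Multiset Q × Multiset Q) (q : Q) : ℤ :=
  (Multiset.count q t.2 : ℤ) - (Multiset.count q t.1 : ℤ)

/-- The displacement of a multiset `π` of transitions. -/
def displM (π : Multiset (Multiset Q × Multiset Q)) (q : Q) : ℤ :=
  (π.map fun t => displ t q).sum

/-- `C' = C + Δ(π)` (as vectors in `ℤ^Q`). -/
def AddDispl (C : Multiset Q) (π : Multiset (Multiset Q × Multiset Q))
    (C' : Multiset Q) : Prop :=
  ∀ q : Q, (Multiset.count q C' : ℤ) = (Multiset.count q C : ℤ) + displM π q

/-- A multiset `π ∈ ℕ^T` of transitions is potentially realisable if `IC(i) + Δ(π) ∈ ℕ^Q`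
for some input `i`. (Leaderless, single input variable.) -/
def PotReal (P : PopulationProtocol Q Unit)
    (π : Multiset (Multiset Q × Multiset Q)) : Prop :=
  (∀ t ∈ π, t ∈ P.T) ∧ ∃ i : ℕ, ∃ C : Multiset Q, AddDispl (P.IC fun _ => i) π C

/-- A configuration is `j`-saturated if every state is populated by at least `j` agents. -/
def Saturated (j : ℕ) (C : Multiset Q) : Prop := ∀ q : Q, j ≤ Multiset.count q C

/-- `C` is `(1/k)`-concentrated in `S`: `k·C(Q∖S) ≤ |C|`. -/
def ConcInv (k : ℕ) (S : Finset Q) (C : Multiset Q) : Prop :=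
  k * Multiset.card (C.filter fun q => q ∉ S) ≤ Multiset.card C

end PopulationProtocol

open PopulationProtocol

/-- bounded, length-controlled strengthening of Dickson's lemma: every
infinite sequence of vectors of `ℕ^n` with `|v_i| ≤ i + δ` contains an increasing (componentwise)
subsequence of length `g(n)+1` entirely within a prefix of length bounded by some `N`. -/
theorem controlled_dickson (δ : ℕ) (g : ℕ → ℕ) (n : ℕ) :
    ∃ N : ℕ, ∀ v : ℕ → (Fin n → ℕ), (∀ i, (∑ j, v i j) ≤ i + δ) →
      ∃ idx : Fin (g n + 1) → ℕ, StrictMono idx ∧ idx (Fin.last (g n)) ≤ N ∧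
        Monotone (v ∘ idx) := by
  by_contra h
  push_neg at h
  choose w hw1 hw2 using h
  set U : Ultrafilter ℕ := Ultrafilter.of Filter.atTop with hUdef
  have hUle : (U : Filter ℕ) ≤ Filter.atTop := Ultrafilter.of_le _
  -- define the limit sequence
  have key : ∀ i : ℕ, ∃ u : Fin n → ℕ, (∑ j, u j ≤ i + δ) ∧ {N | w N i = u} ∈ U := by
    intro i
    have hfin : ({u : Fin n → ℕ | ∑ j, u j ≤ i + δ}).Finite := by
      apply Set.Finite.subset (Set.Finite.pi (fun j : Fin n => Set.finite_Iic (i + δ)))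
      intro u hu j _
      exact le_trans (Finset.single_le_sum (fun k _ => Nat.zero_le _) (Finset.mem_univ j)) hu
    have hmem : {u : Fin n → ℕ | ∑ j, u j ≤ i + δ} ∈ U.map (fun N => w N i) := by
      have : ∀ N : ℕ, w N i ∈ {u : Fin n → ℕ | ∑ j, u j ≤ i + δ} := fun N => hw1 N i
      exact Filter.mem_map.2 (Filter.univ_mem' this)
    obtain ⟨a, ha, hpure⟩ := Ultrafilter.eq_pure_of_finite_mem hfin hmem
    refine ⟨a, ha, ?_⟩
    have : {a} ∈ (U.map (fun N => w N i) : Filter (Fin n → ℕ)) := by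
      rw [hpure]; exact Filter.singleton_mem_pure
    simpa [Filter.mem_map, Set.preimage] using this
  choose v hv1 hv2 using key
  -- extract an infinite monotone subsequence from v by Dickson's lemma
  haveI : IsWellOrder ℕ (· < ·) := inferInstance
  obtain ⟨e, he⟩ := (Set.isPWO_univ_iff.2 inferInstance : (Set.univ : Set (Fin n → ℕ)).IsPWO).exists_monotone_subseq (f := v)
    (fun _ => Set.mem_univ _)
  set idx : Fin (g n + 1) → ℕ := fun k => e k with hidx
  have hsm : StrictMono idx := fun a b hab => e.strictMono (by exact_mod_cast hab)
  set M : ℕ := idx (Fin.last (g n)) with hM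
  -- a bad large N agreeing with v on idx
  have hT : (⋂ k : Fin (g n + 1), {N | w N (idx k) = v (idx k)}) ∈ U :=
    (Filter.iInter_mem).2 fun k => hv2 (idx k)
  have hbig : {N : ℕ | M ≤ N} ∈ U := hUle (Filter.mem_atTop M)
  obtain ⟨N, hN1, hN2⟩ := Filter.nonempty_of_mem (Filter.inter_mem hT hbig)
  simp only [Set.mem_iInter, Set.mem_setOf_eq] at hN1
  refine hw2 N idx hsm hN2 ?_
  intro a b hab
  have hva : w N (idx a) = v (idx a) := hN1 a
  have hvb : w N (idx b) = v (idx b) := hN1 b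
  simp only [Function.comp_apply, hva, hvb]
  exact he (by exact_mod_cast hab)
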